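/- The function D ↦ E_OL(D) is strictly decreasing on (0, σs²]. -/

import Mathlib

/-- The function `D ↦ E_OL(D)` is strictly decreasing on `(0, σs²]`. -/
theorem stmt_7 (σs σz ρs ρz : ℝ) (hσs : 0 < σs) (hσz : 0 < σz)
    (hρs : |ρs| < 1) (hρz : |ρz| < 1)
    (Dth : ℝ) (hDth : Dth = σs^2 * (2 - ρz - |ρs|) / (2 - ρz))
    (EOL : ℝ → ℝ)
    (hEOL : ∀ D, EOL D =
      if Dth ≤ D
      then (2 * σz^2 / (3 - ρz)) *
        Real.log (σs^2 * (1 + |ρs|) / (D + (2 - ρz) * (D - σs^2) + σs^2 * |ρs|))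
      else 2 * σz^2 * (Real.log ((2 - ρz - |ρs|) * σs^2 / ((2 - ρz) * D))
        + (1 / (3 - ρz)) * Real.log ((2 - ρz) * (1 + |ρs|) / (2 - ρz - |ρs|)))) :
    StrictAntiOn EOL (Set.Ioc 0 (σs^2)) := by
  obtain ⟨hρz1, hρz2⟩ := abs_lt.mp hρz
  have ha0 : (0:ℝ) < 2 - ρz := by linarith
  have ha3 : (0:ℝ) < 3 - ρz := by linarith
  have hr0 : 0 ≤ |ρs| := abs_nonneg _
  have har : 0 < 2 - ρz - |ρs| := by linarith
  have hs : 0 < σs^2 := by positivity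
  have hz : 0 < σz^2 := by positivity
  have hDth0 : 0 < Dth := by
    rw [hDth]; exact div_pos (mul_pos hs har) ha0
  have hN : 0 < σs^2 * (1 + |ρs|) := by nlinarith
  have hK : 0 < (2 - ρz - |ρs|) * σs^2 := mul_pos har hs
  have hgDth : Dth + (2 - ρz) * (Dth - σs^2) + σs^2 * |ρs| = Dth := by
    rw [hDth]; field_simp; ring
  intro x hx y hy hxy
  obtain ⟨hx0, hxs⟩ := hx
  obtain ⟨hy0, hys⟩ := hy
  rw [hEOL x, hEOL y]
  rcases le_or_gt Dth x with h1 | h1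
  · have h2 : Dth ≤ y := le_of_lt (lt_of_le_of_lt h1 hxy)
    rw [if_pos h1, if_pos h2]
    have hgx : 0 < x + (2 - ρz) * (x - σs^2) + σs^2 * |ρs| := by nlinarith
    have hgxy : x + (2 - ρz) * (x - σs^2) + σs^2 * |ρs|
        < y + (2 - ρz) * (y - σs^2) + σs^2 * |ρs| := by nlinarith
    have hlog := Real.log_lt_log (div_pos hN (lt_trans hgx hgxy))
      (div_lt_div_of_pos_left hN hgx hgxy)
    have hc : 0 < 2 * σz^2 / (3 - ρz) := by positivity
    exact mul_lt_mul_of_pos_left hlog hc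
  · rw [if_neg (not_le.mpr h1)]
    rcases le_or_gt Dth y with h2 | h2
    · -- mixed case : x < Dth ≤ y
      rw [if_pos h2]
      have hgy : 0 < y + (2 - ρz) * (y - σs^2) + σs^2 * |ρs| := by nlinarith
      have hgyD : Dth ≤ y + (2 - ρz) * (y - σs^2) + σs^2 * |ρs| := by nlinarith
      have hdiv : σs^2 * (1 + |ρs|) / (y + (2 - ρz) * (y - σs^2) + σs^2 * |ρs|)
          ≤ σs^2 * (1 + |ρs|) / Dth :=
        div_le_div_of_nonneg_left hN.le hDth0 hgyD
      have hND : σs^2 * (1 + |ρs|) / Dth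
          = (2 - ρz) * (1 + |ρs|) / (2 - ρz - |ρs|) := by
        rw [hDth]; field_simp
      have hlog1 : Real.log (σs^2 * (1 + |ρs|) / (y + (2 - ρz) * (y - σs^2) + σs^2 * |ρs|))
          ≤ Real.log ((2 - ρz) * (1 + |ρs|) / (2 - ρz - |ρs|)) := by
        rw [← hND]
        exact (Real.log_le_log_iff (div_pos hN hgy) (div_pos hN hDth0)).mpr hdiv
      have hlog2 : 0 < Real.log ((2 - ρz - |ρs|) * σs^2 / ((2 - ρz) * x)) := by
        apply Real.log_pos
        rw [one_lt_div (mul_pos ha0 hx0)]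
        have : x < σs^2 * (2 - ρz - |ρs|) / (2 - ρz) := hDth ▸ h1
        calc (2 - ρz) * x < (2 - ρz) * (σs^2 * (2 - ρz - |ρs|) / (2 - ρz)) := by
              exact mul_lt_mul_of_pos_left this ha0
          _ = (2 - ρz - |ρs|) * σs^2 := by field_simp
      have hc : 0 < 2 * σz^2 / (3 - ρz) := by positivity
      have hmul := mul_le_mul_of_nonneg_left hlog1 hc.le
      have hpos : 0 < 2 * σz^2 * Real.log ((2 - ρz - |ρs|) * σs^2 / ((2 - ρz) * x)) :=
        mul_pos (by positivity) hlog2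
      have hring : 2 * σz^2 * (Real.log ((2 - ρz - |ρs|) * σs^2 / ((2 - ρz) * x))
            + (1 / (3 - ρz)) * Real.log ((2 - ρz) * (1 + |ρs|) / (2 - ρz - |ρs|)))
          = 2 * σz^2 * Real.log ((2 - ρz - |ρs|) * σs^2 / ((2 - ρz) * x))
            + (2 * σz^2 / (3 - ρz)) * Real.log ((2 - ρz) * (1 + |ρs|) / (2 - ρz - |ρs|)) := by
        ring
      rw [hring]
      linarith
    · -- both below Dth
      rw [if_neg (not_le.mpr h2)]
      have hlt : (2 - ρz - |ρs|) * σs^2 / ((2 - ρz) * y)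
          < (2 - ρz - |ρs|) * σs^2 / ((2 - ρz) * x) := by
        apply div_lt_div_of_pos_left hK (mul_pos ha0 hx0)
        exact mul_lt_mul_of_pos_left hxy ha0
      have hlog := Real.log_lt_log (div_pos hK (mul_pos ha0 hy0)) hlt
      exact mul_lt_mul_of_pos_left (add_lt_add_left hlog _) (by positivity)
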